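/- Let f(z) = z + a_{r+1}z^{r+1} + ⋯ be holomorphic near 0 and tangent to the identity with a_{r+1} ≠ 0. Then the index β = (1/2πi) ∮_γ dz/(z − f(z)), taken over a small positive loop γ around 0, is invariant under holomorphic local conjugation: if g = φ⁻¹ ∘ f ∘ φ with φ a local biholomorphism fixing 0, then g has the same index as f. -/

import Mathlib

open Filter Complex Metric Set
open scoped Real Topology

section helpers
private lemma circleIntegral_add' {f g : ℂ → ℂ} {c : ℂ} {R : ℝ} (hf : CircleIntegrable f c R)
    (hg : CircleIntegrable g c R) :
    (∮ z in C(c, R), (f z + g z)) = (∮ z in C(c, R), f z) + ∮ z in C(c, R), g z := by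
  simp only [circleIntegral, smul_add, intervalIntegral.integral_add hf.out hg.out]

private lemma circleIntegral_finset_sum' {ι : Type*} (s : Finset ι) (F : ι → ℂ → ℂ) {c : ℂ}
    {R : ℝ} (h : ∀ i ∈ s, CircleIntegrable (F i) c R) :
    (∮ z in C(c, R), ∑ i ∈ s, F i z) = ∑ i ∈ s, ∮ z in C(c, R), F i z := by
  simp only [circleIntegral]
  rw [← intervalIntegral.integral_finset_sum (fun i hi => (h i hi).out)]
  congr 1
  funext θ
  rw [Finset.smul_sum]

private lemma factor_order (h : ℂ → ℂ) (hh : AnalyticAt ℂ h 0) (h0 : h 0 = 0)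
    (hne : ¬ ∀ᶠ z in 𝓝 (0:ℂ), h z = 0) :
    ∃ k : ℕ, 1 ≤ k ∧ ∃ v : ℂ → ℂ, AnalyticAt ℂ v 0 ∧ v 0 ≠ 0 ∧
      ∀ᶠ z in 𝓝 (0:ℂ), h z = z ^ k * v z := by
  obtain ⟨k, v, hv, hv0, heq⟩ := hh.exists_eventuallyEq_pow_smul_nonzero_iff.mpr hne
  have heq' : ∀ᶠ z in 𝓝 (0:ℂ), h z = z ^ k * v z := by
    filter_upwards [heq] with z hz
    simpa [smul_eq_mul] using hz
  refine ⟨k, ?_, v, hv, hv0, heq'⟩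
  rcases Nat.eq_zero_or_pos k with hk | hk
  · exfalso
    have h00 := heq'.self_of_nhds
    rw [h0, hk, pow_zero, one_mul] at h00
    exact hv0 h00.symm
  · exact hk

private lemma norm_fderiv_complex (f : ℂ → ℂ) (x : ℂ) : ‖fderiv ℂ f x‖ = ‖deriv f x‖ := by
  rw [← toSpanSingleton_deriv]
  simp

private lemma norm_sub_right_of_mem_segment {x y ξ : ℂ} (hξ : ξ ∈ segment ℝ x y) :
    ‖ξ - y‖ ≤ ‖x - y‖ := by
  obtain ⟨α, β, hα, hβ, hαβ, rfl⟩ := hξ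
  have hβ1 : β = 1 - α := by linarith
  have h2 : α • x + β • y - y = α • (x - y) := by rw [hβ1]; module
  rw [h2, norm_smul]
  have h3 : α ≤ 1 := by linarith
  calc ‖α‖ * ‖x - y‖ = α * ‖x - y‖ := by rw [Real.norm_of_nonneg hα]
  _ ≤ 1 * ‖x - y‖ := mul_le_mul_of_nonneg_right h3 (norm_nonneg _)
  _ = ‖x - y‖ := one_mul _
end helpers

private lemma core (f g φ U W : ℂ → ℂ) (c : ℕ → ℂ) (n : ℕ) (hn : 1 ≤ n)
    (hf : AnalyticAt ℂ f 0) (hg : AnalyticAt ℂ g 0) (hφ : AnalyticAt ℂ φ 0)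
    (hg0 : g 0 = 0) (hφ0 : φ 0 = 0) (hφ1 : deriv φ 0 ≠ 0)
    (hU : AnalyticAt ℂ U 0) (hU0 : U 0 ≠ 0) (hW : AnalyticAt ℂ W 0)
    (hfac : ∀ᶠ z in 𝓝 (0:ℂ), z - f z = z ^ n * U z)
    (hdec : ∀ᶠ z in 𝓝 (0:ℂ), (U z)⁻¹ = (∑ j ∈ Finset.range (n+1), c j * z ^ j) + z ^ (n+1) * W z)
    (hgne : ¬ ∀ᶠ z in 𝓝 (0:ℂ), g z = z)
    (hconj : ∀ᶠ z in 𝓝 (0:ℂ), φ (g z) = f (φ z)) :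
    ∃ ρ₀ > (0:ℝ), ∀ ρ : ℝ, 0 < ρ → ρ < ρ₀ →
      (∮ z in C(0, ρ), (z - g z)⁻¹) = (2 * Real.pi * Complex.I) * c (n-1) := by
  -- φ is z * w z with w 0 ≠ 0
  have hφne : ¬ ∀ᶠ z in 𝓝 (0:ℂ), φ z = 0 := by
    intro hev
    apply hφ1
    have h1 : deriv φ 0 = deriv (fun _ : ℂ => (0:ℂ)) 0 :=
      Filter.EventuallyEq.deriv_eq (hev : φ =ᶠ[𝓝 0] fun _ => 0)
    simpa using h1
  obtain ⟨k, hk, w, hw, hw0, hφw'⟩ := factor_order φ hφ hφ0 hφne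
  have hk1 : k = 1 := by
    by_contra hk1
    apply hφ1
    have hD : HasDerivAt (fun z : ℂ => z ^ k * w z)
        (((k : ℂ) * 0 ^ (k-1)) * w 0 + 0 ^ k * deriv w 0) 0 :=
      (hasDerivAt_pow k 0).mul hw.differentiableAt.hasDerivAt
    have h1 : deriv φ 0 = deriv (fun z : ℂ => z ^ k * w z) 0 :=
      Filter.EventuallyEq.deriv_eq (hφw' : φ =ᶠ[𝓝 0] fun z => z ^ k * w z)
    rw [h1, hD.deriv]
    have h2 : (0:ℂ) ^ (k-1) = 0 := zero_pow (by omega)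
    have h3 : (0:ℂ) ^ k = 0 := zero_pow (by omega)
    rw [h2, h3]; ring
  subst hk1
  have hφw : ∀ᶠ z in 𝓝 (0:ℂ), φ z = z * w z := by
    filter_upwards [hφw'] with z h; simpa using h
  -- g factorization
  have hgne' : ¬ ∀ᶠ z in 𝓝 (0:ℂ), z - g z = 0 := by
    intro hev; apply hgne; filter_upwards [hev] with z h; linear_combination -h
  obtain ⟨m, hm, u, hu, hu0, hgu⟩ := factor_order (fun z => z - g z)
    (analyticAt_id.sub hg) (by simp [hg0]) hgne'
  -- analytic neighborhoods
  obtain ⟨rφ, hrφ, hφan⟩ := Metric.eventually_nhds_iff_ball.mp hφ.eventually_analyticAt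
  have hφan' : AnalyticOnNhd ℂ φ (ball 0 rφ) := fun z hz => hφan z hz
  have hφdan : AnalyticOnNhd ℂ (deriv φ) (ball 0 rφ) := hφan'.deriv
  obtain ⟨rw', hrw', hwan⟩ := Metric.eventually_nhds_iff_ball.mp hw.eventually_analyticAt
  have hwan' : AnalyticOnNhd ℂ w (ball 0 rw') := fun z hz => hwan z hz
  have hwdan : AnalyticOnNhd ℂ (deriv w) (ball 0 rw') := hwan'.deriv
  -- second-derivative bound
  set rL := rφ / 2 with hrLdef
  have hrLpos : 0 < rL := by positivity
  have hLsub : closedBall (0:ℂ) rL ⊆ ball 0 rφ := by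
    intro x hx
    rw [mem_closedBall] at hx
    rw [mem_ball]
    have : rL < rφ := by rw [hrLdef]; linarith
    calc dist x 0 ≤ rL := hx
    _ < rφ := this
  have hcont2 : ContinuousOn (deriv (deriv φ)) (closedBall (0:ℂ) rL) := fun x hx =>
    (hφdan.deriv x (hLsub hx)).continuousAt.continuousWithinAt
  obtain ⟨L, hL⟩ := (isCompact_closedBall (0:ℂ) rL).exists_bound_of_continuousOn hcont2
  set K := max L 0 + 1 with hKdef
  have hKpos : 0 < K := by
    have : (0:ℝ) ≤ max L 0 := le_max_right _ _
    rw [hKdef]; linarith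
  have hK' : ∀ x ∈ closedBall (0:ℂ) rL, ‖deriv (deriv φ) x‖ ≤ K := fun x hx =>
    (hL x hx).trans (by rw [hKdef]; have := le_max_left L 0; linarith)
  have hLip : ∀ x ∈ closedBall (0:ℂ) rL, ∀ y ∈ closedBall (0:ℂ) rL,
      ‖deriv φ x - deriv φ y‖ ≤ K * ‖x - y‖ := by
    intro x hx y hy
    exact (convex_closedBall _ _).norm_image_sub_le_of_norm_fderiv_le
      (fun ξ hξ => (hφdan ξ (hLsub hξ)).differentiableAt)
      (fun ξ hξ => by rw [norm_fderiv_complex]; exact hK' ξ hξ) hy hx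
  set a := deriv φ 0 with hadef
  have hapos : 0 < ‖a‖ := norm_pos_iff.mpr hφ1
  -- merged f-side facts on a ball
  have hfev : ∀ᶠ z in 𝓝 (0:ℂ),
      (z - f z = z ^ n * U z ∧
        (U z)⁻¹ = (∑ j ∈ Finset.range (n+1), c j * z ^ j) + z ^ (n+1) * W z) ∧
      (U z ≠ 0 ∧ AnalyticAt ℂ f z) ∧ (AnalyticAt ℂ W z ∧ AnalyticAt ℂ U z) := by
    filter_upwards [hfac, hdec, hU.continuousAt.eventually_ne hU0, hf.eventually_analyticAt,
      hW.eventually_analyticAt, hU.eventually_analyticAt] with z h1 h2 h3 h4 h5 h6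
    exact ⟨⟨h1, h2⟩, ⟨h3, h4⟩, h5, h6⟩
  obtain ⟨rf', hrf', hfb⟩ := Metric.eventually_nhds_iff_ball.mp hfev
  -- tendsto facts
  have tendsto_sub : Tendsto (fun z : ℂ => z - g z) (𝓝 0) (𝓝 0) := by
    have h1 : ContinuousAt (fun z : ℂ => z - g z) 0 := continuousAt_id.sub hg.continuousAt
    simpa [hg0] using h1.tendsto
  have tendsto_g : Tendsto g (𝓝 0) (𝓝 0) := by simpa [hg0] using hg.continuousAt.tendsto
  have tendsto_φ : Tendsto φ (𝓝 0) (𝓝 0) := by simpa [hφ0] using hφ.continuousAt.tendsto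
  have tendsto_dφ : Tendsto (deriv φ) (𝓝 0) (𝓝 a) :=
    (hφdan 0 (mem_ball_self hrφ)).continuousAt.tendsto
  -- derivative of φ in terms of w
  have hφ'ev : ∀ᶠ z in 𝓝 (0:ℂ), deriv φ z = w z + z * deriv w z := by
    have h1 : deriv φ =ᶠ[𝓝 (0:ℂ)] deriv (fun z => z * w z) :=
      Filter.EventuallyEq.deriv (hφw : φ =ᶠ[𝓝 0] fun z => z * w z)
    filter_upwards [h1, hw.eventually_analyticAt] with z h2 h3
    have h4 : HasDerivAt (fun y : ℂ => y * w y) (1 * w z + z * deriv w z) z :=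
      (hasDerivAt_id z).mul h3.differentiableAt.hasDerivAt
    rw [h2, h4.deriv]; ring
  -- big merged z-side eventuality
  have hzev : ∀ᶠ z in 𝓝 (0:ℂ),
      ((z - g z = z ^ m * u z ∧ u z ≠ 0) ∧ (φ z = z * w z ∧ w z ≠ 0) ∧
        (deriv φ z = w z + z * deriv w z ∧ φ (g z) = f (φ z))) ∧
      ((‖deriv φ z - a‖ ≤ ‖a‖/4 ∧ ‖z - g z‖ ≤ ‖a‖/(4*K)) ∧
        (g z ∈ closedBall (0:ℂ) rL ∧ φ z ∈ ball (0:ℂ) rf') ∧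
        (AnalyticAt ℂ g z ∧ z ∈ ball (0:ℂ) rφ ∧ z ∈ closedBall (0:ℂ) rL ∧
          z ∈ ball (0:ℂ) rw')) := by
    have e7 : ∀ᶠ y in 𝓝 a, ‖y - a‖ ≤ ‖a‖/4 := by
      filter_upwards [Metric.closedBall_mem_nhds a (show (0:ℝ) < ‖a‖/4 by positivity)] with y hy
      rwa [mem_closedBall, dist_eq_norm] at hy
    have e8 : ∀ᶠ y in 𝓝 (0:ℂ), ‖y‖ ≤ ‖a‖/(4*K) := by
      filter_upwards [Metric.closedBall_mem_nhds (0:ℂ)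
        (show (0:ℝ) < ‖a‖/(4*K) by positivity)] with y hy
      rwa [mem_closedBall, dist_zero_right] at hy
    filter_upwards [hgu, hu.continuousAt.eventually_ne hu0, hφw, hw.continuousAt.eventually_ne hw0,
      hφ'ev, hconj, tendsto_dφ.eventually e7, tendsto_sub.eventually e8,
      tendsto_g.eventually (Metric.closedBall_mem_nhds (0:ℂ) hrLpos),
      tendsto_φ.eventually (Metric.ball_mem_nhds (0:ℂ) hrf'),
      hg.eventually_analyticAt, Metric.ball_mem_nhds (0:ℂ) hrφ,
      Metric.closedBall_mem_nhds (0:ℂ) hrLpos, Metric.ball_mem_nhds (0:ℂ) hrw']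
      with z h1 h2 h3 h4 h5 h6 h7 h8 h9 h10 h11 h12 h13 h14
    exact ⟨⟨⟨h1, h2⟩, ⟨h3, h4⟩, h5, h6⟩, ⟨h7, h8⟩, ⟨h9, h10⟩, h11, h12, h13, h14⟩
  obtain ⟨r, hrpos, hball⟩ := Metric.eventually_nhds_iff_ball.mp hzev
  -- definitions
  set i2 : ℂ → ℂ := fun z => deriv φ z * (φ z - f (φ z))⁻¹ with hi2def
  set D : ℂ → ℂ := fun z => (z - g z)⁻¹ - i2 z with hDdef
  -- K1 : second order Taylor bound
  have K1 : ∀ z ∈ ball (0:ℂ) r, ‖φ z - φ (g z) - (z - g z) * deriv φ z‖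
      ≤ K * (‖z - g z‖ * ‖z - g z‖) := by
    intro z hz
    obtain ⟨⟨⟨h1,h2⟩,⟨h3,h4⟩,h5,h6⟩,⟨h7,h8⟩,⟨h9,h10⟩,h11,h12,h13,h14⟩ := hball z hz
    have hseg : segment ℝ (g z) z ⊆ closedBall (0:ℂ) rL :=
      (convex_closedBall _ _).segment_subset h9 h13
    set ψ : ℂ → ℂ := fun ξ => φ ξ - ξ * deriv φ z with hψdef
    have hdiff : ∀ ξ ∈ segment ℝ (g z) z, DifferentiableAt ℂ ψ ξ := fun ξ hξ =>
      ((hφan' ξ (hLsub (hseg hξ))).differentiableAt).sub (differentiableAt_id.mul_const _)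
    have hbound : ∀ ξ ∈ segment ℝ (g z) z, ‖fderiv ℂ ψ ξ‖ ≤ K * ‖z - g z‖ := by
      intro ξ hξ
      rw [norm_fderiv_complex]
      have hd : HasDerivAt ψ (deriv φ ξ - 1 * deriv φ z) ξ :=
        ((hφan' ξ (hLsub (hseg hξ))).differentiableAt.hasDerivAt).sub
          ((hasDerivAt_id ξ).mul_const _)
      rw [hd.deriv, one_mul]
      calc ‖deriv φ ξ - deriv φ z‖ ≤ K * ‖ξ - z‖ := hLip ξ (hseg hξ) z h13
      _ ≤ K * ‖g z - z‖ :=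
          mul_le_mul_of_nonneg_left (norm_sub_right_of_mem_segment hξ) hKpos.le
      _ = K * ‖z - g z‖ := by rw [norm_sub_rev]
    have hmvt := (convex_segment (g z) z).norm_image_sub_le_of_norm_fderiv_le hdiff hbound
      (left_mem_segment ℝ (g z) z) (right_mem_segment ℝ (g z) z)
    have heq : ψ z - ψ (g z) = φ z - φ (g z) - (z - g z) * deriv φ z := by
      simp only [hψdef]; ring
    rw [heq] at hmvt
    calc ‖φ z - φ (g z) - (z - g z) * deriv φ z‖ ≤ K * ‖z - g z‖ * ‖z - g z‖ := hmvt
    _ = K * (‖z - g z‖ * ‖z - g z‖) := by ring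
  -- K2 : lower bound
  have K2 : ∀ z ∈ ball (0:ℂ) r, (‖a‖/2) * ‖z - g z‖ ≤ ‖φ z - φ (g z)‖ := by
    intro z hz
    obtain ⟨⟨⟨h1,h2⟩,⟨h3,h4⟩,h5,h6⟩,⟨h7,h8⟩,⟨h9,h10⟩,h11,h12,h13,h14⟩ := hball z hz
    have hK1 := K1 z hz
    have hA : ‖z - g z‖ * ‖deriv φ z‖ ≤ ‖φ z - φ (g z)‖ + K * (‖z - g z‖ * ‖z - g z‖) := by
      have he : (z - g z) * deriv φ z
          = (φ z - φ (g z)) - (φ z - φ (g z) - (z - g z) * deriv φ z) := by ring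
      calc ‖z - g z‖ * ‖deriv φ z‖ = ‖(z - g z) * deriv φ z‖ := (norm_mul _ _).symm
      _ = ‖(φ z - φ (g z)) - (φ z - φ (g z) - (z - g z) * deriv φ z)‖ := by rw [← he]
      _ ≤ ‖φ z - φ (g z)‖ + ‖φ z - φ (g z) - (z - g z) * deriv φ z‖ := norm_sub_le _ _
      _ ≤ _ := by linarith
    have h3a : 3 * ‖a‖ / 4 ≤ ‖deriv φ z‖ := by
      have hb : ‖a‖ ≤ ‖deriv φ z‖ + ‖deriv φ z - a‖ := by
        have : a = deriv φ z - (deriv φ z - a) := by ring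
        calc ‖a‖ = ‖deriv φ z - (deriv φ z - a)‖ := by rw [← this]
        _ ≤ ‖deriv φ z‖ + ‖deriv φ z - a‖ := norm_sub_le _ _
      linarith
    have hsmall : K * ‖z - g z‖ ≤ ‖a‖ / 4 := by
      calc K * ‖z - g z‖ ≤ K * (‖a‖/(4*K)) := mul_le_mul_of_nonneg_left h8 hKpos.le
      _ = ‖a‖/4 := by field_simp
    have p1 : 3 * ‖a‖ / 4 * ‖z - g z‖ ≤ ‖deriv φ z‖ * ‖z - g z‖ :=
      mul_le_mul_of_nonneg_right h3a (norm_nonneg _)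
    have p2 : K * ‖z - g z‖ * ‖z - g z‖ ≤ ‖a‖ / 4 * ‖z - g z‖ :=
      mul_le_mul_of_nonneg_right hsmall (norm_nonneg _)
    nlinarith [norm_nonneg (z - g z), norm_nonneg (φ z - φ (g z))]
  -- K3 : nonvanishing
  have K3 : ∀ z ∈ ball (0:ℂ) r, z ≠ 0 → (z - g z ≠ 0 ∧ φ z - φ (g z) ≠ 0 ∧ φ z ≠ 0) := by
    intro z hz hz0
    obtain ⟨⟨⟨h1,h2⟩,⟨h3,h4⟩,h5,h6⟩,⟨h7,h8⟩,⟨h9,h10⟩,h11,h12,h13,h14⟩ := hball z hz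
    have hx : z - g z ≠ 0 := by rw [h1]; exact mul_ne_zero (pow_ne_zero _ hz0) h2
    refine ⟨hx, ?_, by rw [h3]; exact mul_ne_zero hz0 h4⟩
    have hK2 := K2 z hz
    have hxpos : 0 < ‖z - g z‖ := norm_pos_iff.mpr hx
    intro h0
    rw [h0, norm_zero] at hK2
    nlinarith
  -- K4 : boundedness of D
  set Cb := 2*K/‖a‖ with hCbdef
  have K4 : ∀ z ∈ ball (0:ℂ) r, z ≠ 0 → ‖D z‖ ≤ Cb := by
    intro z hz hz0
    obtain ⟨hx, hy, hφz0⟩ := K3 z hz hz0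
    obtain ⟨⟨⟨h1,h2⟩,⟨h3,h4⟩,h5,h6⟩,⟨h7,h8⟩,⟨h9,h10⟩,h11,h12,h13,h14⟩ := hball z hz
    have hDz : D z = (φ z - φ (g z) - (z - g z) * deriv φ z)
        * ((z - g z)⁻¹ * (φ z - φ (g z))⁻¹) := by
      simp only [hDdef, hi2def]
      rw [← h6]
      field_simp
    rw [hDz, norm_mul, norm_mul, norm_inv, norm_inv]
    have hK1 := K1 z hz
    have hK2 := K2 z hz
    have hxpos : 0 < ‖z - g z‖ := norm_pos_iff.mpr hx
    have hypos : 0 < ‖φ z - φ (g z)‖ := norm_pos_iff.mpr hy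
    have hXY : (0:ℝ) < ‖z - g z‖ * ‖φ z - φ (g z)‖ := mul_pos hxpos hypos
    have hrw : ‖φ z - φ (g z) - (z - g z) * deriv φ z‖ * (‖z - g z‖⁻¹ * ‖φ z - φ (g z)‖⁻¹)
        = ‖φ z - φ (g z) - (z - g z) * deriv φ z‖ / (‖z - g z‖ * ‖φ z - φ (g z)‖) := by
      rw [div_eq_mul_inv, mul_inv]
    rw [hrw, div_le_iff₀ hXY]
    have p4 : Cb * ((‖a‖/2) * ‖z - g z‖ * ‖z - g z‖) ≤ Cb * (‖z - g z‖ * ‖φ z - φ (g z)‖) := by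
      apply mul_le_mul_of_nonneg_left _ (by positivity)
      calc (‖a‖/2) * ‖z - g z‖ * ‖z - g z‖ ≤ ‖φ z - φ (g z)‖ * ‖z - g z‖ :=
            mul_le_mul_of_nonneg_right hK2 hxpos.le
      _ = ‖z - g z‖ * ‖φ z - φ (g z)‖ := mul_comm _ _
    have hCbK : Cb * (‖a‖/2) = K := by
      rw [hCbdef, div_mul_eq_mul_div, div_eq_iff hapos.ne']
      ring
    have p5 : Cb * ((‖a‖/2) * ‖z - g z‖ * ‖z - g z‖) = K * (‖z - g z‖ * ‖z - g z‖) := by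
      calc Cb * ((‖a‖/2) * ‖z - g z‖ * ‖z - g z‖)
          = (Cb * (‖a‖/2)) * (‖z - g z‖ * ‖z - g z‖) := by ring
      _ = K * (‖z - g z‖ * ‖z - g z‖) := by rw [hCbK]
    exact le_trans hK1 (le_trans (le_of_eq p5.symm) p4)
  -- K5 : differentiability on the punctured ball
  have K5a : ∀ z ∈ ball (0:ℂ) r, z ≠ 0 → DifferentiableAt ℂ (fun z => (z - g z)⁻¹) z := by
    intro z hz hz0
    obtain ⟨hx, -, -⟩ := K3 z hz hz0
    obtain ⟨⟨⟨h1,h2⟩,⟨h3,h4⟩,h5,h6⟩,⟨h7,h8⟩,⟨h9,h10⟩,h11,h12,h13,h14⟩ := hball z hz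
    exact (differentiableAt_id.sub h11.differentiableAt).inv hx
  have K5b : ∀ z ∈ ball (0:ℂ) r, z ≠ 0 → DifferentiableAt ℂ i2 z := by
    intro z hz hz0
    obtain ⟨-, hy, -⟩ := K3 z hz hz0
    obtain ⟨⟨⟨h1,h2⟩,⟨h3,h4⟩,h5,h6⟩,⟨h7,h8⟩,⟨h9,h10⟩,h11,h12,h13,h14⟩ := hball z hz
    have hfφ : AnalyticAt ℂ f (φ z) := (hfb (φ z) h10).2.1.2
    have hφz : DifferentiableAt ℂ φ z := (hφan' z h12).differentiableAt
    have hne : φ z - f (φ z) ≠ 0 := by rw [← h6]; exact hy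
    exact ((hφdan z h12).differentiableAt).mul
      ((hφz.sub (hfφ.differentiableAt.comp z hφz)).inv hne)
  have K5 : ∀ z ∈ ball (0:ℂ) r, z ≠ 0 → DifferentiableAt ℂ D z := fun z hz hz0 =>
    (K5a z hz hz0).sub (K5b z hz hz0)
  -- the integral of D vanishes on small circles
  have HD0 : ∀ ρ : ℝ, 0 < ρ → ρ < r → (∮ z in C(0,ρ), D z) = 0 := by
    intro ρ hρ hρr
    have hmem : ∀ (ε : ℝ), 0 < ε → ∀ z ∈ closedBall (0:ℂ) ρ \ ball (0:ℂ) ε,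
        z ∈ ball (0:ℂ) r ∧ z ≠ 0 := by
      intro ε hε z hz
      obtain ⟨hz1, hz2⟩ := hz
      rw [mem_closedBall, dist_zero_right] at hz1
      rw [mem_ball, dist_zero_right, not_lt] at hz2
      constructor
      · rw [mem_ball, dist_zero_right]; linarith
      · intro h0; rw [h0, norm_zero] at hz2; linarith
    have hconst : ∀ ε : ℝ, 0 < ε → ε ≤ ρ → (∮ z in C(0,ρ), D z) = ∮ z in C(0,ε), D z := by
      intro ε hε hερ
      apply circleIntegral_eq_of_differentiable_on_annulus_off_countable hε hερ countable_empty
      · intro z hz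
        exact (K5 z (hmem ε hε z hz).1 (hmem ε hε z hz).2).continuousAt.continuousWithinAt
      · intro z hz
        have hz' : z ∈ closedBall (0:ℂ) ρ \ ball (0:ℂ) ε :=
          ⟨ball_subset_closedBall hz.1.1, fun hc => hz.1.2 (ball_subset_closedBall hc)⟩
        exact K5 z (hmem ε hε z hz').1 (hmem ε hε z hz').2
    have hbound : ∀ ε : ℝ, 0 < ε → ε ≤ ρ → ‖∮ z in C(0,ρ), D z‖ ≤ 2*π*ε*Cb := by
      intro ε hε hερ
      rw [hconst ε hε hερ]
      have hsp : ∀ z ∈ sphere (0:ℂ) ε, ‖D z‖ ≤ Cb := by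
        intro z hz
        rw [mem_sphere_iff_norm, sub_zero] at hz
        have hz0 : z ≠ 0 := by intro h0; rw [h0, norm_zero] at hz; linarith
        have hzb : z ∈ ball (0:ℂ) r := by rw [mem_ball, dist_zero_right, hz]; linarith
        exact K4 z hzb hz0
      exact circleIntegral.norm_integral_le_of_norm_le_const hε.le hsp
    have htend : Tendsto (fun ε : ℝ => 2*π*ε*Cb) (𝓝[>] (0:ℝ)) (𝓝 0) := by
      have hcont : Continuous (fun ε : ℝ => 2*π*ε*Cb) := by fun_prop
      exact tendsto_nhdsWithin_of_tendsto_nhds (hcont.tendsto' 0 0 (by ring))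
    have hev : ∀ᶠ ε in 𝓝[>] (0:ℝ), ‖∮ z in C(0,ρ), D z‖ ≤ 2*π*ε*Cb := by
      filter_upwards [Ioc_mem_nhdsGT hρ] with ε hε
      exact hbound ε hε.1 hε.2
    exact norm_le_zero_iff.mp (ge_of_tendsto htend hev)
  -- Final computation
  refine ⟨r, hrpos, ?_⟩
  intro ρ hρ hρr
  have hsphere : ∀ z ∈ sphere (0:ℂ) ρ, z ∈ ball (0:ℂ) r ∧ z ≠ 0 := by
    intro z hz
    rw [mem_sphere_iff_norm, sub_zero] at hz
    constructor
    · rw [mem_ball, dist_zero_right, hz]; exact hρr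
    · intro h0; rw [h0, norm_zero] at hz; linarith
  have hi2c : CircleIntegrable i2 0 ρ :=
    ContinuousOn.circleIntegrable hρ.le fun z hz =>
      (K5b z (hsphere z hz).1 (hsphere z hz).2).continuousAt.continuousWithinAt
  have hDc : CircleIntegrable D 0 ρ :=
    ContinuousOn.circleIntegrable hρ.le fun z hz =>
      (K5 z (hsphere z hz).1 (hsphere z hz).2).continuousAt.continuousWithinAt
  have split : (∮ z in C(0,ρ), (z - g z)⁻¹) = (∮ z in C(0,ρ), i2 z) + ∮ z in C(0,ρ), D z := by
    have hfun : (fun z : ℂ => (z - g z)⁻¹) = fun z => i2 z + D z := by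
      funext z; simp only [hDdef]; ring
    rw [hfun, circleIntegral_add' hi2c hDc]
  rw [split, HD0 ρ hρ hρr, add_zero]
  -- differentiability of the summand terms
  have hEdiff : ∀ (jz : ℤ), ∀ z ∈ ball (0:ℂ) r, z ≠ 0 →
      DifferentiableAt ℂ (fun z => deriv φ z * (φ z) ^ jz) z := by
    intro jz z hz hz0
    obtain ⟨-, -, hφz0⟩ := K3 z hz hz0
    obtain ⟨⟨⟨h1,h2⟩,⟨h3,h4⟩,h5,h6⟩,⟨h7,h8⟩,⟨h9,h10⟩,h11,h12,h13,h14⟩ := hball z hz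
    have hd1 : DifferentiableAt ℂ (fun x : ℂ => x ^ jz) (φ z) :=
      (hasDerivAt_zpow jz (φ z) (Or.inl hφz0)).differentiableAt
    exact ((hφdan z h12).differentiableAt).mul
      (hd1.comp z (hφan' z h12).differentiableAt)
  have htaildiff : ∀ z ∈ ball (0:ℂ) r,
      DifferentiableAt ℂ (fun z => deriv φ z * (φ z * W (φ z))) z := by
    intro z hz
    obtain ⟨⟨⟨h1,h2⟩,⟨h3,h4⟩,h5,h6⟩,⟨h7,h8⟩,⟨h9,h10⟩,h11,h12,h13,h14⟩ := hball z hz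
    have hWφ : AnalyticAt ℂ W (φ z) := (hfb (φ z) h10).2.2.1
    have hφz : DifferentiableAt ℂ φ z := (hφan' z h12).differentiableAt
    exact ((hφdan z h12).differentiableAt).mul
      (hφz.mul (hWφ.differentiableAt.comp z hφz))
  -- rewrite the integrand of i2 on the sphere
  have hstep : Set.EqOn i2 (fun z =>
      (∑ j ∈ Finset.range (n+1), c j * (deriv φ z * (φ z) ^ ((j:ℤ) - (n:ℤ))))
        + deriv φ z * (φ z * W (φ z))) (sphere (0:ℂ) ρ) := by
    intro z hzs
    obtain ⟨hzb, hz0⟩ := hsphere z hzs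
    obtain ⟨⟨⟨h1,h2⟩,⟨h3,h4⟩,h5,h6⟩,⟨h7,h8⟩,⟨h9,h10⟩,h11,h12,h13,h14⟩ := hball z hzb
    obtain ⟨⟨hfacφ, hdecφ⟩, ⟨hUφ, -⟩, -, -⟩ := hfb (φ z) h10
    have hφz0 : φ z ≠ 0 := by rw [h3]; exact mul_ne_zero hz0 h4
    have hφzn : (φ z) ^ n ≠ 0 := pow_ne_zero _ hφz0
    simp only [hi2def]
    rw [hfacφ, mul_inv, hdecφ]
    calc deriv φ z * (((φ z) ^ n)⁻¹ *
          ((∑ j ∈ Finset.range (n+1), c j * (φ z) ^ j) + (φ z) ^ (n+1) * W (φ z)))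
        = (∑ j ∈ Finset.range (n+1), deriv φ z * (((φ z) ^ n)⁻¹ * (c j * (φ z) ^ j)))
            + deriv φ z * (((φ z) ^ n)⁻¹ * ((φ z) ^ (n+1) * W (φ z))) := by
          rw [mul_add ((φ z ^ n)⁻¹), mul_add (deriv φ z), Finset.mul_sum, Finset.mul_sum]
      _ = (∑ j ∈ Finset.range (n+1), c j * (deriv φ z * (φ z) ^ ((j:ℤ) - (n:ℤ))))
            + deriv φ z * (φ z * W (φ z)) := by
          congr 1
          · apply Finset.sum_congr rfl
            intro j hj
            rw [zpow_sub₀ hφz0, zpow_natCast, zpow_natCast, div_eq_mul_inv]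
            ring
          · rw [pow_succ]
            field_simp
  rw [circleIntegral.integral_congr hρ.le hstep]
  -- split the integral
  have hterm_int : ∀ j ∈ Finset.range (n+1),
      CircleIntegrable (fun z => c j * (deriv φ z * (φ z) ^ ((j:ℤ) - (n:ℤ)))) 0 ρ := by
    intro j hj
    exact ContinuousOn.circleIntegrable hρ.le fun z hz =>
      ((differentiableAt_const (c j)).mul
        (hEdiff ((j:ℤ) - (n:ℤ)) z (hsphere z hz).1 (hsphere z hz).2)).continuousAt.continuousWithinAt
  have hsum_int : CircleIntegrable (fun z =>
      ∑ j ∈ Finset.range (n+1), c j * (deriv φ z * (φ z) ^ ((j:ℤ) - (n:ℤ)))) 0 ρ := by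
    apply ContinuousOn.circleIntegrable hρ.le
    intro z hz
    have : DifferentiableAt ℂ (fun z =>
        ∑ j ∈ Finset.range (n+1), c j * (deriv φ z * (φ z) ^ ((j:ℤ) - (n:ℤ)))) z := by
      apply DifferentiableAt.fun_sum
      intro j hj
      exact (differentiableAt_const (c j)).mul
        (hEdiff ((j:ℤ) - (n:ℤ)) z (hsphere z hz).1 (hsphere z hz).2)
    exact this.continuousAt.continuousWithinAt
  have htail_int : CircleIntegrable (fun z => deriv φ z * (φ z * W (φ z))) 0 ρ :=
    ContinuousOn.circleIntegrable hρ.le fun z hz =>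
      (htaildiff z (hsphere z hz).1).continuousAt.continuousWithinAt
  rw [circleIntegral_add' hsum_int htail_int]
  -- the tail integral vanishes by Cauchy's theorem
  have htail0 : (∮ z in C(0,ρ), deriv φ z * (φ z * W (φ z))) = 0 := by
    apply circleIntegral_eq_zero_of_differentiable_on_off_countable hρ.le countable_empty
    · intro z hz
      rw [mem_closedBall, dist_zero_right] at hz
      have hzb : z ∈ ball (0:ℂ) r := by rw [mem_ball, dist_zero_right]; linarith
      exact (htaildiff z hzb).continuousAt.continuousWithinAt
    · intro z hz
      have hzb : z ∈ ball (0:ℂ) r := by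
        rw [mem_ball, dist_zero_right]
        rw [mem_diff, mem_ball, dist_zero_right] at hz
        linarith [hz.1]
      exact htaildiff z hzb
  rw [htail0, add_zero]
  rw [circleIntegral_finset_sum' _ _ hterm_int]
  -- evaluate each term
  have hIn1 : (∮ z in C(0,ρ), deriv φ z * (φ z) ^ (((n-1:ℕ):ℤ) - (n:ℤ))) = 2*π*I := by
    have hexp : ((n-1:ℕ):ℤ) - (n:ℤ) = -1 := by omega
    have hcongr : Set.EqOn (fun z => deriv φ z * (φ z) ^ (((n-1:ℕ):ℤ) - (n:ℤ)))
        (fun z => z⁻¹ + deriv w z * (w z)⁻¹) (sphere (0:ℂ) ρ) := by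
      intro z hzs
      obtain ⟨hzb, hz0⟩ := hsphere z hzs
      obtain ⟨⟨⟨h1,h2⟩,⟨h3,h4⟩,h5,h6⟩,⟨h7,h8⟩,⟨h9,h10⟩,h11,h12,h13,h14⟩ := hball z hzb
      show deriv φ z * (φ z) ^ (((n-1:ℕ):ℤ) - (n:ℤ)) = z⁻¹ + deriv w z * (w z)⁻¹
      rw [hexp, zpow_neg_one, h5, h3, mul_inv]
      field_simp [hz0, h4]
    rw [circleIntegral.integral_congr hρ.le hcongr]
    have hint1 : CircleIntegrable (fun z : ℂ => z⁻¹) 0 ρ :=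
      ContinuousOn.circleIntegrable hρ.le fun z hz =>
        ((differentiableAt_fun_id (𝕜 := ℂ) (E := ℂ)).inv (hsphere z hz).2).continuousAt.continuousWithinAt
    have hwdiff : ∀ z ∈ ball (0:ℂ) r, DifferentiableAt ℂ (fun z => deriv w z * (w z)⁻¹) z := by
      intro z hz
      obtain ⟨⟨⟨h1,h2⟩,⟨h3,h4⟩,h5,h6⟩,⟨h7,h8⟩,⟨h9,h10⟩,h11,h12,h13,h14⟩ := hball z hz
      exact ((hwdan z h14).differentiableAt).mul (((hwan' z h14).differentiableAt).inv h4)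
    have hint2 : CircleIntegrable (fun z => deriv w z * (w z)⁻¹) 0 ρ :=
      ContinuousOn.circleIntegrable hρ.le fun z hz =>
        (hwdiff z (hsphere z hz).1).continuousAt.continuousWithinAt
    rw [circleIntegral_add' hint1 hint2]
    have h1 : (∮ z in C(0,ρ), z⁻¹) = 2*π*I := by
      have hs := circleIntegral.integral_sub_center_inv (0:ℂ) (ne_of_gt hρ)
      simpa using hs
    have h2 : (∮ z in C(0,ρ), deriv w z * (w z)⁻¹) = 0 := by
      apply circleIntegral_eq_zero_of_differentiable_on_off_countable hρ.le countable_empty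
      · intro z hz
        rw [mem_closedBall, dist_zero_right] at hz
        have hzb : z ∈ ball (0:ℂ) r := by rw [mem_ball, dist_zero_right]; linarith
        exact (hwdiff z hzb).continuousAt.continuousWithinAt
      · intro z hz
        have hzb : z ∈ ball (0:ℂ) r := by
          rw [mem_ball, dist_zero_right]
          rw [mem_diff, mem_ball, dist_zero_right] at hz
          linarith [hz.1]
        exact hwdiff z hzb
    rw [h1, h2, add_zero]
  have hIj0 : ∀ j ∈ Finset.range (n+1), j ≠ n-1 →
      (∮ z in C(0,ρ), deriv φ z * (φ z) ^ ((j:ℤ) - (n:ℤ))) = 0 := by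
    intro j hj hjne
    set k : ℤ := (j:ℤ) - (n:ℤ) + 1 with hkdef
    have hk0 : k ≠ 0 := by rw [hkdef]; omega
    apply circleIntegral.integral_eq_zero_of_hasDerivWithinAt (f := fun z => (k:ℂ)⁻¹ * (φ z) ^ k)
      hρ.le
    intro z hzs
    obtain ⟨hzb, hz0⟩ := hsphere z hzs
    obtain ⟨⟨⟨h1,h2⟩,⟨h3,h4⟩,h5,h6⟩,⟨h7,h8⟩,⟨h9,h10⟩,h11,h12,h13,h14⟩ := hball z hzb
    have hφz0 : φ z ≠ 0 := by rw [h3]; exact mul_ne_zero hz0 h4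
    have hd1 : HasDerivAt (fun x : ℂ => x ^ k) ((k:ℂ) * (φ z) ^ (k-1)) (φ z) :=
      hasDerivAt_zpow k (φ z) (Or.inl hφz0)
    have hd2 : HasDerivAt φ (deriv φ z) z := (hφan' z h12).differentiableAt.hasDerivAt
    have hd3 := (hd1.comp z hd2).const_mul ((k:ℂ)⁻¹)
    have heq : (k:ℂ)⁻¹ * ((k:ℂ) * (φ z) ^ (k-1) * deriv φ z)
        = deriv φ z * (φ z) ^ ((j:ℤ) - (n:ℤ)) := by
      have hk1 : k - 1 = (j:ℤ) - (n:ℤ) := by rw [hkdef]; ring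
      have hkc : (k:ℂ) ≠ 0 := Int.cast_ne_zero.mpr hk0
      rw [hk1]
      field_simp
    rw [← heq]
    exact (hd3.hasDerivWithinAt).congr_deriv rfl
  -- sum up
  have hsum_eval : ∀ j ∈ Finset.range (n+1),
      (∮ z in C(0,ρ), c j * (deriv φ z * (φ z) ^ ((j:ℤ) - (n:ℤ))))
        = if j = n-1 then c j * (2*π*I) else 0 := by
    intro j hj
    rw [circleIntegral.integral_const_mul]
    by_cases hc : j = n-1
    · rw [if_pos hc, hc]
      rw [hIn1]
    · rw [if_neg hc, hIj0 j hj hc, mul_zero]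
  rw [Finset.sum_congr rfl hsum_eval]
  rw [Finset.sum_ite_eq' (Finset.range (n+1)) (n-1) (fun j => c j * (2*π*I))]
  rw [if_pos (Finset.mem_range.mpr (by omega))]
  ring


private lemma peel (V : ℂ → ℂ) (hV : AnalyticAt ℂ V 0) :
    ∃ Wf : ℂ → ℂ, AnalyticAt ℂ Wf 0 ∧ ∀ᶠ z in 𝓝 (0:ℂ), V z = V 0 + z * Wf z := by
  by_cases hne : ∀ᶠ z in 𝓝 (0:ℂ), V z - V 0 = 0
  · refine ⟨fun _ => 0, analyticAt_const, ?_⟩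
    filter_upwards [hne] with z hz
    have : V z = V 0 := by linear_combination hz
    simp [this]
  · obtain ⟨k, hk, v, hv, hv0, heq⟩ := factor_order (fun z => V z - V 0)
      (hV.sub analyticAt_const) (by simp) hne
    refine ⟨fun z => z ^ (k - 1) * v z, (analyticAt_id.pow _).mul hv, ?_⟩
    filter_upwards [heq] with z hz
    have hzk : z ^ k = z * z ^ (k - 1) := by
      conv_lhs => rw [show k = 1 + (k - 1) by omega]
      rw [pow_add, pow_one]
    calc V z = V 0 + (V z - V 0) := by ring
    _ = V 0 + z ^ k * v z := by rw [hz]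
    _ = V 0 + z * (z ^ (k - 1) * v z) := by rw [hzk]; ring

private lemma taylor_decomp (V : ℂ → ℂ) (hV : AnalyticAt ℂ V 0) (n : ℕ) :
    ∃ (c : ℕ → ℂ) (Wf : ℂ → ℂ), AnalyticAt ℂ Wf 0 ∧
      ∀ᶠ z in 𝓝 (0:ℂ), V z = (∑ j ∈ Finset.range (n+1), c j * z ^ j) + z ^ (n+1) * Wf z := by
  induction n with
  | zero =>
    obtain ⟨Wf, hW, hWe⟩ := peel V hV
    exact ⟨fun _ => V 0, Wf, hW, by filter_upwards [hWe] with z hz; simpa using hz⟩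
  | succ n ih =>
    obtain ⟨c, W', hW', he⟩ := ih
    obtain ⟨Wf, hW, hWe⟩ := peel W' hW'
    refine ⟨fun j => if j = n+1 then W' 0 else c j, Wf, hW, ?_⟩
    filter_upwards [he, hWe] with z h1 h2
    rw [Finset.sum_range_succ]
    have hsum : ∑ j ∈ Finset.range (n+1), (if j = n+1 then W' 0 else c j) * z ^ j
        = ∑ j ∈ Finset.range (n+1), c j * z ^ j :=
      Finset.sum_congr rfl fun j hj => by
        rw [if_neg (Nat.ne_of_lt (Finset.mem_range.mp hj))]
    rw [hsum, if_pos rfl, h1, h2]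
    ring

theorem index_invariant_tangent_to_identity (f g : ℂ → ℂ)
    (hf : AnalyticAt ℂ f 0) (hg : AnalyticAt ℂ g 0)
    (hf0 : f 0 = 0) (hg0 : g 0 = 0)
    (hf1 : deriv f 0 = 1) (hg1 : deriv g 0 = 1)
    (hfne : ¬ ∀ᶠ z in nhds (0 : ℂ), f z = z)
    (hgne : ¬ ∀ᶠ z in nhds (0 : ℂ), g z = z)
    (hconj : ∃ φ : ℂ → ℂ, AnalyticAt ℂ φ 0 ∧ φ 0 = 0 ∧ deriv φ 0 ≠ 0 ∧
      ∀ᶠ z in nhds (0 : ℂ), φ (g z) = f (φ z)) :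
    ∃ ρ₀ > (0 : ℝ), ∀ ρ₁ ρ₂ : ℝ, 0 < ρ₁ → ρ₁ < ρ₀ → 0 < ρ₂ → ρ₂ < ρ₀ →
      (2 * Real.pi * I)⁻¹ • (∮ z in C(0, ρ₁), (z - f z)⁻¹)
        = (2 * Real.pi * I)⁻¹ • (∮ z in C(0, ρ₂), (z - g z)⁻¹) := by
  obtain ⟨φ, hφ, hφ0, hφ1, hconjφ⟩ := hconj
  have hfne' : ¬ ∀ᶠ z in 𝓝 (0:ℂ), z - f z = 0 := by
    intro hev; apply hfne; filter_upwards [hev] with z h; linear_combination -h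
  obtain ⟨n, hn, U, hU, hU0, hfac⟩ := factor_order (fun z => z - f z)
    (analyticAt_id.sub hf) (by simp [hf0]) hfne'
  obtain ⟨c, W, hW, hdec⟩ := taylor_decomp (fun z => (U z)⁻¹) (hU.inv hU0) n
  obtain ⟨ρg, hρg, Hg⟩ := core f g φ U W c n hn hf hg hφ hg0 hφ0 hφ1 hU hU0 hW
    hfac hdec hgne hconjφ
  obtain ⟨ρf, hρf, Hf⟩ := core f f id U W c n hn hf hf analyticAt_id hf0 rfl (by simp)
    hU hU0 hW hfac hdec hfne (Filter.Eventually.of_forall fun z => rfl)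
  refine ⟨min ρf ρg, lt_min hρf hρg, ?_⟩
  intro ρ₁ ρ₂ h₁ h₁' h₂ h₂'
  rw [Hf ρ₁ h₁ (lt_of_lt_of_le h₁' (min_le_left _ _)),
      Hg ρ₂ h₂ (lt_of_lt_of_le h₂' (min_le_right _ _))]
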